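/- For every bounded open convex set Ω ⊂ ℝ² containing 0, the Minkowski-dimension-type parameter κ_Ω = limsup_{δ→0} log N(Ω, δ) / log(δ^{−1}) satisfies 0 ≤ κ_Ω ≤ 1/2, where N(Ω, δ) is the minimal number of caps B(p, ℓ, δ) = {x ∈ ∂Ω : dist(x, ℓ) < δ} (over boundary points p with supporting line ℓ at p) needed to cover ∂Ω. -/

import Mathlib

open Set
open scoped RealInnerProductSpace

noncomputable section

/-- `n` is an outward unit normal of a supporting line of `Ω` at the boundary point `p`. -/
def IsSupportingNormal (Ω : Set (EuclideanSpace ℝ (Fin 2)))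
    (p n : EuclideanSpace ℝ (Fin 2)) : Prop :=
  p ∈ frontier Ω ∧ ‖n‖ = 1 ∧ ∀ y ∈ Ω, ⟪y, n⟫ ≤ ⟪p, n⟫

/-- The cap `B(p, ℓ, δ) = {x ∈ ∂Ω : dist(x, ℓ) < δ}`, where `ℓ` is the supporting line through
`p` with unit normal `n`. -/
def bdryCap (Ω : Set (EuclideanSpace ℝ (Fin 2)))
    (p n : EuclideanSpace ℝ (Fin 2)) (δ : ℝ) : Set (EuclideanSpace ℝ (Fin 2)) :=
  {x ∈ frontier Ω | |⟪x - p, n⟫| < δ}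

/-- `N(Ω, δ)`: the minimal number of caps of width `δ` needed to cover `∂Ω`. -/
def capCoverNumber (Ω : Set (EuclideanSpace ℝ (Fin 2))) (δ : ℝ) : ℕ :=
  sInf {k : ℕ | ∃ s : Finset (EuclideanSpace ℝ (Fin 2) × EuclideanSpace ℝ (Fin 2)),
    s.card = k ∧ (∀ q ∈ s, IsSupportingNormal Ω q.1 q.2) ∧
    frontier Ω ⊆ ⋃ q ∈ s, bdryCap Ω q.1 q.2 δ}

/-- `κ_Ω = limsup_{δ→0⁺} log N(Ω, δ) / log δ⁻¹`. -/
def kappa (Ω : Set (EuclideanSpace ℝ (Fin 2))) : ℝ :=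
  Filter.limsup (fun δ : ℝ => Real.log (capCoverNumber Ω δ) / Real.log δ⁻¹)
    (nhdsWithin 0 (Ioi 0))

open Real Filter
open scoped Topology

abbrev E2 := EuclideanSpace ℝ (Fin 2)

lemma inner2 (x y : E2) : ⟪x, y⟫ = x 0 * y 0 + x 1 * y 1 := by
  simp [PiLp.inner_apply, Fin.sum_univ_two, RCLike.inner_apply, mul_comm]

lemma normsq2 (x : E2) : ‖x‖^2 = x 0^2 + x 1^2 := by
  rw [EuclideanSpace.norm_eq]
  rw [Real.sq_sqrt (by positivity)]
  simp [Fin.sum_univ_two, sq_abs]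

lemma sqle (a b : ℝ) (ha : 0 ≤ a) (hb : 0 ≤ b) (h : a^2 ≤ b^2) : a ≤ b := by nlinarith

lemma chordarc (a b : ℝ) : (cos b - cos a)^2 + (sin b - sin a)^2 ≤ (b-a)^2 := by
  have h1 : (cos b - cos a)^2 + (sin b - sin a)^2 = 2 - 2 * cos (b - a) := by
    rw [Real.cos_sub]; nlinarith [sin_sq_add_cos_sq a, sin_sq_add_cos_sq b]
  have h2 : 1 - (b-a)^2/2 ≤ cos (b - a) := Real.one_sub_sq_div_two_le_cos
  nlinarith

lemma wedgeQ (d0 d1 a b : ℝ) (hab : a < b) (h2 : b - a ≤ π/2)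
    (hA : d0 * cos a + d1 * sin a ≤ 0) (hB : 0 ≤ d0 * cos b + d1 * sin b) :
    0 ≤ -d0 * sin a + d1 * cos a := by
  have key : sin (b - a) * (-d0 * sin a + d1 * cos a)
      = (d0 * cos b + d1 * sin b) - cos (b - a) * (d0 * cos a + d1 * sin a) := by
    rw [Real.sin_sub, Real.cos_sub]
    linear_combination (d0 * cos b + d1 * sin b) * (Real.sin_sq_add_cos_sq a)
  have hsin : 0 < sin (b - a) := Real.sin_pos_of_pos_of_lt_pi (by linarith) (by linarith [Real.pi_pos])
  have hcos : 0 ≤ cos (b - a) := Real.cos_nonneg_of_mem_Icc ⟨by linarith [Real.pi_pos], h2⟩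
  nlinarith

set_option maxHeartbeats 2000000 in
lemma packBound (R δ : ℝ) (hR : 1 ≤ R) (hδ : 0 < δ) (k : ℕ)
    (x n : ℕ → E2) (θ : ℕ → ℝ)
    (hx : ∀ i, i < k → ‖x i‖ ≤ R)
    (hθ : ∀ i, i < k → θ i ∈ Set.Ioc (-π) π)
    (hcs : ∀ i, i < k → (n i) 0 = cos (θ i) ∧ (n i) 1 = sin (θ i))
    (hmono : ∀ i j, i < j → j < k → θ i < θ j)
    (hsupp : ∀ i j, i < k → j < k → ⟪x i - x j, n j⟫ ≤ 0)
    (hsep : ∀ i j, i < k → j < k → i ≠ j → δ ≤ ⟪x i - x j, n i - n j⟫) :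
    (k : ℝ) ≤ 1 + 16 * Real.sqrt (R / δ) := by
  rcases Nat.lt_or_ge k 2 with hk | hk
  · have : (k : ℝ) ≤ 1 := by exact_mod_cast Nat.lt_succ_iff.mp hk
    have := Real.sqrt_nonneg (R / δ)
    linarith
  -- k ≥ 2
  set m := k - 1 with hm
  have hmk : m < k := Nat.sub_lt (by omega) one_pos
  have hmsucc : m + 1 = k := by omega
  have hlt : ∀ i, i < m → i + 1 < k := by omega
  have hlt' : ∀ i, i < m → i < k := by omega
  -- unit tangent vectors
  set τ : ℕ → E2 := fun i => (WithLp.equiv 2 (Fin 2 → ℝ)).symm ![-(Real.sin (θ i)), Real.cos (θ i)] with hτ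
  have hτ0 : ∀ i, (τ i) 0 = -(Real.sin (θ i)) := by intro i; simp [hτ]
  have hτ1 : ∀ i, (τ i) 1 = Real.cos (θ i) := by intro i; simp [hτ]
  have hτn : ∀ i, ‖τ i‖ = 1 := by
    intro i
    rw [← Real.sqrt_sq (norm_nonneg (τ i)), normsq2, hτ0, hτ1]
    rw [show (-(Real.sin (θ i)))^2 + (Real.cos (θ i))^2 = 1 by nlinarith [sin_sq_add_cos_sq (θ i)]]
    exact Real.sqrt_one
  have hn1 : ∀ i, i < k → ‖n i‖ = 1 := by
    intro i hi
    rw [← Real.sqrt_sq (norm_nonneg (n i)), normsq2, (hcs i hi).1, (hcs i hi).2]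
    rw [show (Real.cos (θ i))^2 + (Real.sin (θ i))^2 = 1 by nlinarith [sin_sq_add_cos_sq (θ i)]]
    exact Real.sqrt_one
  -- basic quantities
  set g : ℕ → ℝ := fun i => θ (i+1) - θ i with hg
  set D : ℕ → ℝ := fun i => ‖x (i+1) - x i‖ with hD
  set P : ℕ → ℝ := fun i => ⟪x (i+1) - x i, n i⟫ with hP
  set Q : ℕ → ℝ := fun i => ⟪x (i+1) - x i, τ i⟫ with hQ
  set H : ℕ → ℝ := fun i => ⟪x i, n i⟫ with hH
  set G : ℕ → ℝ := fun i => ⟪x i, τ i⟫ with hG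
  have hgpos : ∀ i, i < m → 0 < g i := fun i hi => sub_pos.mpr (hmono i (i+1) (Nat.lt_succ_self i) (hlt i hi))
  have hsumg : ∑ i ∈ Finset.range m, g i ≤ 2 * π := by
    rw [hg, Finset.sum_range_sub (f := θ)]
    have h0 := hθ 0 (by omega)
    have h1 := hθ m hmk
    have := h0.1; have := h1.2
    linarith
  -- chord ≤ arc for normals and tangents
  have hchordn : ∀ i, i < m → ‖n (i+1) - n i‖ ≤ g i := by
    intro i hi
    apply sqle _ _ (norm_nonneg _) (le_of_lt (hgpos i hi))
    rw [normsq2]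
    have e0 : (n (i+1) - n i) 0 = cos (θ (i+1)) - cos (θ i) := by
      simp [(hcs _ (hlt i hi)).1, (hcs _ (hlt' i hi)).1]
    have e1 : (n (i+1) - n i) 1 = sin (θ (i+1)) - sin (θ i) := by
      simp [(hcs _ (hlt i hi)).2, (hcs _ (hlt' i hi)).2]
    rw [e0, e1]
    have := chordarc (θ i) (θ (i+1))
    simpa [hg] using this
  have hchordτ : ∀ i, i < m → ‖τ (i+1) - τ i‖ ≤ g i := by
    intro i hi
    apply sqle _ _ (norm_nonneg _) (le_of_lt (hgpos i hi))
    rw [normsq2]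
    have e0 : (τ (i+1) - τ i) 0 = -(sin (θ (i+1))) - -(sin (θ i)) := by simp [hτ0]
    have e1 : (τ (i+1) - τ i) 1 = cos (θ (i+1)) - cos (θ i) := by simp [hτ1]
    rw [e0, e1]
    have := chordarc (θ i) (θ (i+1))
    have h2 : (-(sin (θ (i+1))) - -(sin (θ i)))^2 = (sin (θ (i+1)) - sin (θ i))^2 := by ring
    rw [h2]
    simpa [hg] using (by linarith : (sin (θ (i+1)) - sin (θ i))^2 + (cos (θ (i+1)) - cos (θ i))^2 ≤ (θ (i+1) - θ i)^2)
  -- separation: δ ≤ D i * g i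
  have hDg : ∀ i, i < m → δ ≤ D i * g i := by
    intro i hi
    have h1 : δ ≤ ⟪x (i+1) - x i, n (i+1) - n i⟫ :=
      hsep (i+1) i (hlt i hi) (hlt' i hi) (by omega)
    have h2 : ⟪x (i+1) - x i, n (i+1) - n i⟫ ≤ D i * ‖n (i+1) - n i‖ :=
      real_inner_le_norm _ _
    have h3 : D i * ‖n (i+1) - n i‖ ≤ D i * g i :=
      mul_le_mul_of_nonneg_left (hchordn i hi) (norm_nonneg _)
    linarith
  -- signs
  have hPle : ∀ i, i < m → P i ≤ 0 := fun i hi => hsupp (i+1) i (hlt i hi) (hlt' i hi)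
  have hQpos : ∀ i, i < m → g i ≤ π/2 → 0 ≤ Q i := by
    intro i hi hgi
    have hA : (x (i+1) - x i) 0 * cos (θ i) + (x (i+1) - x i) 1 * sin (θ i) ≤ 0 := by
      have := hPle i hi
      simp only [hP] at this
      rwa [inner2, (hcs i (hlt' i hi)).1, (hcs i (hlt' i hi)).2] at this
    have hB : 0 ≤ (x (i+1) - x i) 0 * cos (θ (i+1)) + (x (i+1) - x i) 1 * sin (θ (i+1)) := by
      have h := hsupp i (i+1) (hlt' i hi) (hlt i hi)
      rw [inner2] at h
      have e0 : (x i - x (i+1)) 0 = -((x (i+1) - x i) 0) := by simp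
      have e1 : (x i - x (i+1)) 1 = -((x (i+1) - x i) 1) := by simp
      rw [e0, e1, (hcs (i+1) (hlt i hi)).1, (hcs (i+1) (hlt i hi)).2] at h
      linarith
    have := wedgeQ ((x (i+1) - x i) 0) ((x (i+1) - x i) 1) (θ i) (θ (i+1))
      (hmono i (i+1) (Nat.lt_succ_self i) (hlt i hi)) (by simpa [hg] using hgi) hA hB
    simp only [hQ]
    rw [inner2, hτ0, hτ1]
    linarith
  -- D ≤ -P + |Q|
  have hDPQ : ∀ i, i < m → D i ≤ -P i + |Q i| := by
    intro i hi
    have hsq : D i ^2 = P i ^2 + Q i ^2 := by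
      simp only [hD, hP, hQ]
      rw [normsq2, inner2, inner2, (hcs i (hlt' i hi)).1, (hcs i (hlt' i hi)).2, hτ0, hτ1]
      nlinarith [sin_sq_add_cos_sq (θ i)]
    have h1 : |P i| = -P i := abs_of_nonpos (hPle i hi)
    nlinarith [abs_nonneg (P i), abs_nonneg (Q i), sq_abs (P i), sq_abs (Q i),
      mul_nonneg (abs_nonneg (P i)) (abs_nonneg (Q i)), norm_nonneg (x (i+1) - x i)]
  -- |Q i| ≤ D i ≤ 2R ; |H|,|G| ≤ R
  have hQD : ∀ i, i < m → |Q i| ≤ D i := by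
    intro i hi
    simp only [hQ]
    calc |⟪x (i+1) - x i, τ i⟫| ≤ ‖x (i+1) - x i‖ * ‖τ i‖ := abs_real_inner_le_norm _ _
    _ = D i := by rw [hτn]; ring
  have hD2R : ∀ i, i < m → D i ≤ 2 * R := by
    intro i hi
    calc D i ≤ ‖x (i+1)‖ + ‖x i‖ := norm_sub_le _ _
    _ ≤ 2 * R := by have := hx _ (hlt i hi); have := hx _ (hlt' i hi); linarith
  have hHR : ∀ i, i < k → |H i| ≤ R := by
    intro i hi
    calc |H i| ≤ ‖x i‖ * ‖n i‖ := abs_real_inner_le_norm _ _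
    _ ≤ R := by rw [hn1 i hi]; simpa using hx i hi
  have hGR : ∀ i, i < k → |G i| ≤ R := by
    intro i hi
    calc |G i| ≤ ‖x i‖ * ‖τ i‖ := abs_real_inner_le_norm _ _
    _ ≤ R := by rw [hτn]; simpa using hx i hi
  -- Abel: sum of -P
  have habelP : ∑ i ∈ Finset.range m, (-P i) ≤ 2*R + R * ∑ i ∈ Finset.range m, g i := by
    have hident : ∀ i, i < m → -P i = (H i - H (i+1)) + ⟪x (i+1), n (i+1) - n i⟫ := by
      intro i hi
      simp only [hP, hH, inner_sub_left, inner_sub_right]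
      ring
    have hWb : ∀ i ∈ Finset.range m, (H i - H (i+1)) + ⟪x (i+1), n (i+1) - n i⟫
        ≤ (H i - H (i+1)) + R * g i := by
      intro i hi
      have hi' := Finset.mem_range.mp hi
      have h1 : ⟪x (i+1), n (i+1) - n i⟫ ≤ ‖x (i+1)‖ * ‖n (i+1) - n i‖ := real_inner_le_norm _ _
      have h2 : ‖x (i+1)‖ * ‖n (i+1) - n i‖ ≤ R * g i := by
        apply mul_le_mul (hx _ (hlt i hi')) (hchordn i hi') (norm_nonneg _) (by linarith)
      linarith
    calc ∑ i ∈ Finset.range m, (-P i)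
        = ∑ i ∈ Finset.range m, ((H i - H (i+1)) + ⟪x (i+1), n (i+1) - n i⟫) :=
          Finset.sum_congr rfl (fun i hi => hident i (Finset.mem_range.mp hi))
      _ ≤ ∑ i ∈ Finset.range m, ((H i - H (i+1)) + R * g i) := Finset.sum_le_sum hWb
      _ = (H 0 - H m) + R * ∑ i ∈ Finset.range m, g i := by
          rw [Finset.sum_add_distrib, ← Finset.mul_sum]
          congr 1
          have := Finset.sum_range_sub (f := H) (n := m)
          have h2 : ∑ i ∈ Finset.range m, (H i - H (i+1)) = -∑ i ∈ Finset.range m, (H (i+1) - H i) := by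
            rw [← Finset.sum_neg_distrib]
            exact Finset.sum_congr rfl (fun i _ => by ring)
          rw [h2, this]; ring
      _ ≤ 2*R + R * ∑ i ∈ Finset.range m, g i := by
          have := hHR 0 (by omega); have := hHR m hmk
          have h1 : H 0 - H m ≤ 2*R := by
            cases' abs_le.mp (hHR 0 (by omega)) with a b
            cases' abs_le.mp (hHR m hmk) with c d
            linarith
          linarith
  -- Abel: sum of Q
  have habelQ : ∑ i ∈ Finset.range m, Q i ≤ 2*R + R * ∑ i ∈ Finset.range m, g i := by
    have hident : ∀ i, i < m → Q i = (G (i+1) - G i) + ⟪x (i+1), τ i - τ (i+1)⟫ := by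
      intro i hi
      simp only [hQ, hG, inner_sub_left, inner_sub_right]
      ring
    have hWb : ∀ i ∈ Finset.range m, (G (i+1) - G i) + ⟪x (i+1), τ i - τ (i+1)⟫
        ≤ (G (i+1) - G i) + R * g i := by
      intro i hi
      have hi' := Finset.mem_range.mp hi
      have h1 : ⟪x (i+1), τ i - τ (i+1)⟫ ≤ ‖x (i+1)‖ * ‖τ i - τ (i+1)‖ := real_inner_le_norm _ _
      have h2 : ‖x (i+1)‖ * ‖τ i - τ (i+1)‖ ≤ R * g i := by
        apply mul_le_mul (hx _ (hlt i hi')) ?_ (norm_nonneg _) (by linarith)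
        rw [← norm_neg]; simpa using hchordτ i hi'
      linarith
    calc ∑ i ∈ Finset.range m, Q i
        = ∑ i ∈ Finset.range m, ((G (i+1) - G i) + ⟪x (i+1), τ i - τ (i+1)⟫) :=
          Finset.sum_congr rfl (fun i hi => hident i (Finset.mem_range.mp hi))
      _ ≤ ∑ i ∈ Finset.range m, ((G (i+1) - G i) + R * g i) := Finset.sum_le_sum hWb
      _ = (G m - G 0) + R * ∑ i ∈ Finset.range m, g i := by
          rw [Finset.sum_add_distrib, ← Finset.mul_sum, Finset.sum_range_sub (f := G)]
      _ ≤ 2*R + R * ∑ i ∈ Finset.range m, g i := by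
          have h1 : G m - G 0 ≤ 2*R := by
            cases' abs_le.mp (hGR 0 (by omega)) with a b
            cases' abs_le.mp (hGR m hmk) with c d
            linarith
          linarith
  -- bad set of large gaps
  classical
  set B := (Finset.range m).filter (fun i => π/2 < g i) with hB
  have hBcard : (B.card : ℝ) ≤ 4 := by
    have h1 : (B.card : ℝ) * (π/2) ≤ ∑ i ∈ B, g i := by
      have := Finset.card_nsmul_le_sum B g (π/2)
        (fun i hi => le_of_lt ((Finset.mem_filter.mp hi).2))
      simpa [nsmul_eq_mul] using this
    have h2 : ∑ i ∈ B, g i ≤ ∑ i ∈ Finset.range m, g i :=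
      Finset.sum_le_sum_of_subset_of_nonneg (Finset.filter_subset _ _)
        (fun i hi _ => le_of_lt (hgpos i (Finset.mem_range.mp hi)))
    have hπ := Real.pi_pos
    nlinarith
  have hmemB : ∀ i ∈ B, i < m := fun i hi => Finset.mem_range.mp (Finset.mem_filter.mp hi).1
  have hsumQB : ∑ i ∈ B, |Q i| ≤ 8 * R := by
    calc ∑ i ∈ B, |Q i| ≤ ∑ _i ∈ B, (2*R) := Finset.sum_le_sum
          (fun i hi => le_trans (hQD i (hmemB i hi)) (hD2R i (hmemB i hi)))
      _ = (B.card : ℝ) * (2*R) := by rw [Finset.sum_const, nsmul_eq_mul]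
      _ ≤ 8 * R := by nlinarith [hBcard, hR]
  have hsumQabs : ∑ i ∈ Finset.range m, |Q i| ≤ 2*R + R * ∑ i ∈ Finset.range m, g i + 16 * R := by
    have hsplit := Finset.sum_filter_add_sum_filter_not (Finset.range m) (fun i => π/2 < g i)
      (fun i => |Q i|)
    have hgoodeq : ∑ i ∈ (Finset.range m).filter (fun i => ¬ π/2 < g i), |Q i|
        = ∑ i ∈ (Finset.range m).filter (fun i => ¬ π/2 < g i), Q i := by
      apply Finset.sum_congr rfl
      intro i hi
      have hi' := Finset.mem_filter.mp hi
      exact abs_of_nonneg (hQpos i (Finset.mem_range.mp hi'.1) (le_of_not_gt hi'.2))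
    have hgoodQ : ∑ i ∈ (Finset.range m).filter (fun i => ¬ π/2 < g i), Q i
        = ∑ i ∈ Finset.range m, Q i - ∑ i ∈ B, Q i := by
      rw [hB, eq_sub_iff_add_eq, add_comm]
      exact Finset.sum_filter_add_sum_filter_not (Finset.range m) _ _
    have hBQ : - ∑ i ∈ B, Q i ≤ ∑ i ∈ B, |Q i| := by
      rw [← Finset.sum_neg_distrib]
      exact Finset.sum_le_sum (fun i _ => neg_le_abs _)
    have : ∑ i ∈ Finset.range m, |Q i|
        = (∑ i ∈ B, |Q i|) + ∑ i ∈ (Finset.range m).filter (fun i => ¬ π/2 < g i), |Q i| := by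
      rw [← hsplit, hB]
    rw [this, hgoodeq, hgoodQ]
    have := habelQ
    linarith
  -- total chord length
  have hsumD : ∑ i ∈ Finset.range m, D i ≤ 33 * R := by
    have h1 : ∑ i ∈ Finset.range m, D i
        ≤ ∑ i ∈ Finset.range m, (-P i) + ∑ i ∈ Finset.range m, |Q i| := by
      rw [← Finset.sum_add_distrib]
      exact Finset.sum_le_sum (fun i hi => hDPQ i (Finset.mem_range.mp hi))
    have hπ : π ≤ 3.15 := by
      have := Real.pi_lt_d2
      linarith
    have hπ0 := Real.pi_pos
    have hg2 : R * ∑ i ∈ Finset.range m, g i ≤ R * (2*π) :=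
      mul_le_mul_of_nonneg_left hsumg (by linarith)
    nlinarith
  -- Cauchy-Schwarz
  have hCS := Finset.sum_sq_le_sum_mul_sum_of_sq_eq_mul (Finset.range m)
    (r := fun i => Real.sqrt (D i * g i)) (f := D) (g := g)
    (fun i hi => norm_nonneg _)
    (fun i hi => le_of_lt (hgpos i (Finset.mem_range.mp hi)))
    (fun i hi => Real.sq_sqrt (mul_nonneg (norm_nonneg _) (le_of_lt (hgpos i (Finset.mem_range.mp hi)))))
  have hrlow : (m : ℝ) * Real.sqrt δ ≤ ∑ i ∈ Finset.range m, Real.sqrt (D i * g i) := by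
    have := Finset.card_nsmul_le_sum (Finset.range m) (fun i => Real.sqrt (D i * g i)) (Real.sqrt δ)
      (fun i hi => Real.sqrt_le_sqrt (hDg i (Finset.mem_range.mp hi)))
    simpa [nsmul_eq_mul] using this
  have hsum_nonneg : (0:ℝ) ≤ ∑ i ∈ Finset.range m, Real.sqrt (D i * g i) :=
    Finset.sum_nonneg (fun i _ => Real.sqrt_nonneg _)
  have hRHS : (∑ i ∈ Finset.range m, D i) * ∑ i ∈ Finset.range m, g i ≤ 256 * R := by
    have hDnn : (0:ℝ) ≤ ∑ i ∈ Finset.range m, D i :=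
      Finset.sum_nonneg (fun i _ => norm_nonneg _)
    have hπ : π ≤ 3.15 := by have := Real.pi_lt_d2; linarith
    have hπ0 := Real.pi_pos
    have hgnn : (0:ℝ) ≤ ∑ i ∈ Finset.range m, g i :=
      Finset.sum_nonneg (fun i hi => le_of_lt (hgpos i (Finset.mem_range.mp hi)))
    nlinarith
  have hm2 : (m:ℝ)^2 * δ ≤ 256 * R := by
    have h1 : ((m:ℝ) * Real.sqrt δ)^2 ≤ (∑ i ∈ Finset.range m, Real.sqrt (D i * g i))^2 := by
      apply pow_le_pow_left₀ (by positivity) hrlow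
    have h2 : ((m:ℝ) * Real.sqrt δ)^2 = (m:ℝ)^2 * δ := by
      rw [mul_pow, Real.sq_sqrt (le_of_lt hδ)]
    nlinarith
  have hmle : (m:ℝ) ≤ 16 * Real.sqrt (R / δ) := by
    have h1 : (m:ℝ)^2 ≤ 256 * (R/δ) := by
      rw [show (256:ℝ) * (R/δ) = (256*R)/δ by ring, le_div_iff₀ hδ]
      exact hm2
    calc (m:ℝ) = Real.sqrt ((m:ℝ)^2) := (Real.sqrt_sq (Nat.cast_nonneg m)).symm
    _ ≤ Real.sqrt (256 * (R/δ)) := Real.sqrt_le_sqrt h1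
    _ = 16 * Real.sqrt (R/δ) := by
        rw [show (256:ℝ) = 16^2 by norm_num, Real.sqrt_mul (by positivity), Real.sqrt_sq (by norm_num)]
  have : (k:ℝ) = (m:ℝ) + 1 := by
    rw [← hmsucc]; push_cast; ring
  linarith

lemma arg_coords (nv : E2) (h : ‖nv‖ = 1) :
    Complex.arg ((nv 0 : ℂ) + (nv 1 : ℂ) * Complex.I) ∈ Set.Ioc (-π) π ∧
    nv 0 = cos (Complex.arg ((nv 0 : ℂ) + (nv 1 : ℂ) * Complex.I)) ∧
    nv 1 = sin (Complex.arg ((nv 0 : ℂ) + (nv 1 : ℂ) * Complex.I)) := by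
  set z : ℂ := (nv 0 : ℂ) + (nv 1 : ℂ) * Complex.I with hz
  have habs : ‖z‖ = 1 := by
    have h2 : (nv 0)^2 + (nv 1)^2 = 1 := by have := normsq2 nv; rw [h] at this; linarith
    have : ‖z‖ = Real.sqrt ((nv 0)^2 + (nv 1)^2) := by
      rw [Complex.norm_def, Complex.normSq_apply]; simp [hz]; ring_nf
    rw [this, h2, Real.sqrt_one]
  have key := Complex.norm_mul_exp_arg_mul_I z
  rw [habs] at key
  simp only [Complex.ofReal_one, one_mul] at key
  refine ⟨⟨Complex.neg_pi_lt_arg z, Complex.arg_le_pi z⟩, ?_, ?_⟩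
  · have hre := congrArg Complex.re key
    rw [Complex.exp_ofReal_mul_I_re] at hre
    simp [hz] at hre; exact hre.symm
  · have him := congrArg Complex.im key
    rw [Complex.exp_ofReal_mul_I_im] at him
    simp [hz] at him; exact him.symm

lemma support_closure {Ω : Set E2} (p nn : E2) (h : IsSupportingNormal Ω p nn) :
    ∀ y ∈ closure Ω, ⟪y, nn⟫ ≤ ⟪p, nn⟫ := by
  intro y hy
  have hcl : closure Ω ⊆ {z : E2 | ⟪z, nn⟫ ≤ ⟪p, nn⟫} :=
    closure_minimal (fun z hz => h.2.2 z hz)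
      (isClosed_le (Continuous.inner continuous_id continuous_const) continuous_const)
  exact hcl hy

lemma exists_normal {Ω : Set E2} (ho : IsOpen Ω) (hc : Convex ℝ Ω) (h0 : (0:E2) ∈ Ω)
    (p : E2) (hp : p ∈ frontier Ω) : ∃ nn : E2, IsSupportingNormal Ω p nn := by
  have hpΩ : p ∉ Ω := by
    rw [ho.frontier_eq] at hp
    exact hp.2
  obtain ⟨f, hf⟩ := geometric_hahn_banach_open_point hc ho hpΩ
  set v := (InnerProductSpace.toDual ℝ E2).symm f with hv
  have hfv : ∀ z, ⟪v, z⟫ = f z := fun z => InnerProductSpace.toDual_symm_apply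
  have hvne : v ≠ 0 := by
    intro hcon
    have h1 := hf 0 h0
    have h2 : f p = ⟪v, p⟫ := (hfv p).symm
    have h3 : f 0 = 0 := map_zero f
    rw [hcon] at h2
    simp at h2
    rw [h3, h2] at h1
    exact lt_irrefl 0 h1
  refine ⟨‖v‖⁻¹ • v, hp, ?_, ?_⟩
  · rw [norm_smul]
    simp [norm_ne_zero_iff.mpr hvne]
  · intro y hy
    have h1 : f y ≤ f p := le_of_lt (hf y hy)
    have h2 : ⟪y, ‖v‖⁻¹ • v⟫ = ‖v‖⁻¹ * f y := by
      rw [real_inner_smul_right, real_inner_comm, hfv]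
    have h3 : ⟪p, ‖v‖⁻¹ • v⟫ = ‖v‖⁻¹ * f p := by
      rw [real_inner_smul_right, real_inner_comm, hfv]
    rw [h2, h3]
    apply mul_le_mul_of_nonneg_left h1 (by positivity)

lemma coverBound {Ω : Set E2} (ho : IsOpen Ω) (hc : Convex ℝ Ω)
    (h0 : (0:E2) ∈ Ω) (R : ℝ) (hR : 1 ≤ R) (hRb : closure Ω ⊆ Metric.closedBall 0 R)
    (δ : ℝ) (hδ : 0 < δ) :
    (capCoverNumber Ω δ : ℝ) ≤ 1 + 16 * Real.sqrt (R / δ) := by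
  classical
  set Pk : Finset (E2 × E2) → Prop := fun s =>
    (∀ q ∈ s, IsSupportingNormal Ω q.1 q.2) ∧
    (∀ q ∈ s, ∀ q' ∈ s, q ≠ q' → δ ≤ ⟪q.1 - q'.1, q.2 - q'.2⟫) with hPk
  have hfr : frontier Ω ⊆ closure Ω := frontier_subset_closure
  -- cardinality bound for packings
  have hcard : ∀ s : Finset (E2 × E2), Pk s → (s.card : ℝ) ≤ 1 + 16 * Real.sqrt (R / δ) := by
    intro s hs
    set k := s.card with hk
    set Θ : E2 × E2 → ℝ := fun q => Complex.arg ((q.2 0 : ℂ) + (q.2 1 : ℂ) * Complex.I) with hΘ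
    have hnormal : ∀ q ∈ s, IsSupportingNormal Ω q.1 q.2 := hs.1
    have hne2 : ∀ q ∈ s, ∀ q' ∈ s, q ≠ q' → q.2 ≠ q'.2 := by
      intro q hq q' hq' hne hcon
      have := hs.2 q hq q' hq' hne
      rw [hcon] at this
      simp at this
      linarith
    have hinj : Set.InjOn Θ s := by
      intro q hq q' hq' heq
      by_contra hne
      apply hne2 q hq q' hq' hne
      have h1 := arg_coords q.2 (hnormal q hq).2.1
      have h2 := arg_coords q'.2 (hnormal q' hq').2.1
      simp only [hΘ] at heq
      have e0 : q.2 0 = q'.2 0 := by rw [h1.2.1, h2.2.1, heq]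
      have e1 : q.2 1 = q'.2 1 := by rw [h1.2.2, h2.2.2, heq]
      ext i
      fin_cases i
      · exact e0
      · exact e1
    have hcardim : (s.image Θ).card = k := by
      rw [Finset.card_image_of_injOn hinj]
    set e := (s.image Θ).orderIsoOfFin hcardim with he
    have hch : ∀ i : Fin k, ∃ q, q ∈ s ∧ Θ q = (e i : ℝ) := by
      intro i
      obtain ⟨q, hq, hq2⟩ := Finset.mem_image.mp (e i).2
      exact ⟨q, hq, hq2⟩
    choose qf hqf1 hqf2 using hch
    set xx : ℕ → E2 := fun i => if h : i < k then (qf ⟨i, h⟩).1 else 0 with hxx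
    set nn : ℕ → E2 := fun i => if h : i < k then (qf ⟨i, h⟩).2 else 0 with hnn
    set th : ℕ → ℝ := fun i => if h : i < k then Θ (qf ⟨i, h⟩) else 0 with hth
    have hqfmem : ∀ i : Fin k, qf i ∈ s := hqf1
    have hqinj : ∀ i j : Fin k, i ≠ j → qf i ≠ qf j := by
      intro i j hij hcon
      apply hij
      have : (e i : ℝ) = (e j : ℝ) := by rw [← hqf2 i, ← hqf2 j, hcon]
      have := Subtype.coe_injective this
      exact e.injective this
    apply packBound R δ hR hδ k xx nn th
    · intro i hi
      simp only [hxx, dif_pos hi]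
      have hmem : (qf ⟨i, hi⟩).1 ∈ closure Ω := hfr (hnormal _ (hqfmem _)).1
      have := hRb hmem
      rwa [Metric.mem_closedBall, dist_zero_right] at this
    · intro i hi
      simp only [hth, dif_pos hi]
      exact (arg_coords _ (hnormal _ (hqfmem ⟨i, hi⟩)).2.1).1
    · intro i hi
      simp only [hnn, hth, dif_pos hi]
      have := arg_coords _ (hnormal _ (hqfmem ⟨i, hi⟩)).2.1
      exact ⟨this.2.1, this.2.2⟩
    · intro i j hij hj
      have hi : i < k := lt_trans hij hj
      simp only [hth, dif_pos hi, dif_pos hj]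
      have hlt : (⟨i, hi⟩ : Fin k) < ⟨j, hj⟩ := hij
      have := e.strictMono hlt
      rw [hqf2 ⟨i, hi⟩, hqf2 ⟨j, hj⟩]
      exact_mod_cast this
    · intro i j hi hj
      simp only [hxx, hnn, dif_pos hi, dif_pos hj]
      have hsup := (hnormal _ (hqfmem ⟨j, hj⟩)).2.2
      have h1 : ⟪(qf ⟨i, hi⟩).1, (qf ⟨j, hj⟩).2⟫ ≤ ⟪(qf ⟨j, hj⟩).1, (qf ⟨j, hj⟩).2⟫ :=
        support_closure _ _ (hnormal _ (hqfmem ⟨j, hj⟩)) _ (hfr (hnormal _ (hqfmem ⟨i, hi⟩)).1)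
      rw [inner_sub_left]
      linarith
    · intro i j hi hj hij
      simp only [hxx, hnn, dif_pos hi, dif_pos hj]
      exact hs.2 _ (hqfmem ⟨i, hi⟩) _ (hqfmem ⟨j, hj⟩)
        (hqinj ⟨i, hi⟩ ⟨j, hj⟩ (by simp [Fin.ext_iff]; omega))
  have hcardN : ∀ s : Finset (E2 × E2), Pk s → s.card ≤ ⌊(1:ℝ) + 16 * Real.sqrt (R / δ)⌋₊ :=
    fun s hs => Nat.le_floor (hcard s hs)
  -- maximal packing
  set A : Set ℕ := {c | ∃ s : Finset (E2 × E2), Pk s ∧ s.card = c} with hA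
  have hA0 : 0 ∈ A := ⟨∅, ⟨by simp, by simp⟩, rfl⟩
  have hAb : BddAbove A := by
    refine ⟨⌊(1:ℝ) + 16 * Real.sqrt (R / δ)⌋₊, ?_⟩
    rintro c ⟨s, hs, rfl⟩
    exact hcardN s hs
  obtain ⟨s, hPs, hcs⟩ := Nat.sSup_mem ⟨0, hA0⟩ hAb
  have hcover : frontier Ω ⊆ ⋃ q ∈ s, bdryCap Ω q.1 q.2 δ := by
    intro y hy
    by_contra hyc
    simp only [Set.mem_iUnion, exists_prop, not_exists, not_and] at hyc
    obtain ⟨ny, hny⟩ := exists_normal ho hc h0 y hy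
    have hout : ∀ q ∈ s, δ ≤ ⟪q.1 - y, q.2⟫ := by
      intro q hq
      have h1 : ¬ (y ∈ bdryCap Ω q.1 q.2 δ) := hyc q hq
      have h2 : ¬ |⟪y - q.1, q.2⟫| < δ := fun habs => h1 ⟨hy, habs⟩
      have h3 : ⟪y - q.1, q.2⟫ ≤ 0 := by
        have := support_closure _ _ (hPs.1 q hq) y (hfr hy)
        rw [inner_sub_left]
        linarith
      push_neg at h2
      rw [abs_of_nonpos h3] at h2
      have : ⟪q.1 - y, q.2⟫ = -⟪y - q.1, q.2⟫ := by
        rw [← inner_neg_left]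
        congr 1
        abel
      linarith [this]
    have hnew : (y, ny) ∉ s := by
      intro hmem
      have h1 : ¬ (y ∈ bdryCap Ω y ny δ) := hyc (y, ny) hmem
      apply h1
      refine ⟨hy, ?_⟩
      simp [hδ]
    have hPk' : Pk (insert (y, ny) s) := by
      constructor
      · intro q hq
        rcases Finset.mem_insert.mp hq with h | h
        · rw [h]; exact hny
        · exact hPs.1 q h
      · intro q hq q' hq' hne
        rcases Finset.mem_insert.mp hq with h | h <;>
          rcases Finset.mem_insert.mp hq' with h' | h'
        · exact absurd (h.trans h'.symm) hne
        · -- q = (y,ny), q' ∈ s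
          subst h
          have hA1 : δ ≤ ⟪q'.1 - y, q'.2⟫ := hout q' h'
          have hA2 : ⟪q'.1 - y, ny⟫ ≤ 0 := by
            have := support_closure _ _ hny q'.1 (hfr (hPs.1 q' h').1)
            rw [inner_sub_left]
            linarith
          have : ⟪(y,ny).1 - q'.1, (y,ny).2 - q'.2⟫
              = -⟪q'.1 - y, ny⟫ + ⟪q'.1 - y, q'.2⟫ := by
            simp only [inner_sub_left, inner_sub_right]
            ring
          rw [this]
          linarith
        · -- q ∈ s, q' = (y,ny)
          subst h'
          have hA1 : δ ≤ ⟪q.1 - y, q.2⟫ := hout q h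
          have hA2 : ⟪q.1 - y, ny⟫ ≤ 0 := by
            have := support_closure _ _ hny q.1 (hfr (hPs.1 q h).1)
            rw [inner_sub_left]
            linarith
          have : ⟪q.1 - (y,ny).1, q.2 - (y,ny).2⟫
              = -⟪q.1 - y, ny⟫ + ⟪q.1 - y, q.2⟫ := by
            simp only [inner_sub_left, inner_sub_right]
            ring
          rw [this]
          linarith
        · exact hPs.2 q h q' h' hne
    have hmem' : (insert (y, ny) s).card ∈ A := ⟨_, hPk', rfl⟩
    have hle := le_csSup hAb hmem'
    rw [Finset.card_insert_of_notMem hnew, hcs] at hle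
    omega
  have hmem : capCoverNumber Ω δ ≤ s.card := by
    apply Nat.sInf_le
    exact ⟨s, rfl, hPs.1, hcover⟩
  calc (capCoverNumber Ω δ : ℝ) ≤ (s.card : ℝ) := by exact_mod_cast hmem
    _ ≤ 1 + 16 * Real.sqrt (R / δ) := hcard s hPs

/-- For every bounded open convex `Ω ⊂ ℝ²` containing `0`, `0 ≤ κ_Ω ≤ 1/2`. -/
theorem stmt_9 (Ω : Set (EuclideanSpace ℝ (Fin 2)))
    (hb : Bornology.IsBounded Ω) (ho : IsOpen Ω) (hc : Convex ℝ Ω)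
    (h0 : (0 : EuclideanSpace ℝ (Fin 2)) ∈ Ω) :
    0 ≤ kappa Ω ∧ kappa Ω ≤ 1 / 2 := by
  classical
  obtain ⟨r, hr⟩ := hb.closure.subset_closedBall 0
  set R : ℝ := max r 1 with hRdef
  have hR : 1 ≤ R := le_max_right r 1
  have hRb : closure Ω ⊆ Metric.closedBall 0 R :=
    hr.trans (Metric.closedBall_subset_closedBall (le_max_left r 1))
  set f : ℝ → ℝ := fun δ => Real.log (capCoverNumber Ω δ) / Real.log δ⁻¹ with hf
  set c : ℝ := Real.log (17 * Real.sqrt R) with hcdef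
  have hsR : 1 ≤ Real.sqrt R := by
    rw [show (1:ℝ) = Real.sqrt 1 by rw [Real.sqrt_one]]
    exact Real.sqrt_le_sqrt hR
  have hc0 : 0 ≤ c := Real.log_nonneg (by nlinarith)
  set g : ℝ → ℝ := fun δ => 1/2 + c / Real.log δ⁻¹ with hg
  have hev : ∀ᶠ δ in 𝓝[>] (0:ℝ), δ ∈ Ioo (0:ℝ) 1 :=
    Ioo_mem_nhdsGT_of_mem ⟨le_refl 0, zero_lt_one⟩
  have key : ∀ δ, δ ∈ Ioo (0:ℝ) 1 → 0 ≤ f δ ∧ f δ ≤ g δ := by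
    intro δ hδm
    obtain ⟨hδ0, hδ1⟩ := hδm
    have hinv1 : 1 < δ⁻¹ := (one_lt_inv₀ hδ0).mpr hδ1
    have hL : 0 < Real.log δ⁻¹ := Real.log_pos hinv1
    constructor
    · exact div_nonneg (Real.log_natCast_nonneg _) hL.le
    · have hcb := coverBound ho hc h0 R hR hRb δ hδ0
      have hsq : Real.sqrt (R/δ) = Real.sqrt R * Real.sqrt δ⁻¹ := by
        rw [div_eq_mul_inv, Real.sqrt_mul (by positivity)]
      have hs1 : 1 ≤ Real.sqrt δ⁻¹ := by
        rw [show (1:ℝ) = Real.sqrt 1 by rw [Real.sqrt_one]]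
        exact Real.sqrt_le_sqrt hinv1.le
      have hNle : (capCoverNumber Ω δ : ℝ) ≤ 17 * (Real.sqrt R * Real.sqrt δ⁻¹) := by
        rw [hsq] at hcb
        nlinarith
      have hlogN : Real.log (capCoverNumber Ω δ) ≤ c + Real.log δ⁻¹ / 2 := by
        rcases Nat.eq_zero_or_pos (capCoverNumber Ω δ) with h | h
        · rw [h]
          simp only [Nat.cast_zero, Real.log_zero]
          linarith
        · have hpos : (0:ℝ) < (capCoverNumber Ω δ : ℝ) := by exact_mod_cast h
          have hne1 : (17 : ℝ) * Real.sqrt R ≠ 0 := by positivity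
          have hne2 : Real.sqrt δ⁻¹ ≠ 0 := by positivity
          calc Real.log (capCoverNumber Ω δ)
              ≤ Real.log (17 * Real.sqrt R * Real.sqrt δ⁻¹) := by
                apply Real.log_le_log hpos
                linarith [hNle]
            _ = c + Real.log (Real.sqrt δ⁻¹) := by
                rw [Real.log_mul hne1 hne2, hcdef]
            _ = c + Real.log δ⁻¹ / 2 := by
                rw [Real.log_sqrt (by positivity)]
      have h2 : f δ ≤ (c + Real.log δ⁻¹ / 2) / Real.log δ⁻¹ := by
        simp only [hf]
        exact (div_le_div_iff_of_pos_right hL).mpr hlogN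
      have h3 : (c + Real.log δ⁻¹ / 2) / Real.log δ⁻¹ = 1/2 + c / Real.log δ⁻¹ := by
        rw [add_div, div_div, mul_comm, ← div_div, div_self hL.ne']
        ring
      rw [hg]
      dsimp only
      rw [← h3]
      exact h2
  have hfg : f ≤ᶠ[𝓝[>] (0:ℝ)] g := hev.mono (fun δ h => (key δ h).2)
  have hf0 : ∀ᶠ δ in 𝓝[>] (0:ℝ), 0 ≤ f δ := hev.mono (fun δ h => (key δ h).1)
  have hgt : Tendsto g (𝓝[>] (0:ℝ)) (𝓝 (1/2)) := by
    have h1 : Tendsto (fun δ:ℝ => Real.log δ⁻¹) (𝓝[>] (0:ℝ)) atTop :=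
      Real.tendsto_log_atTop.comp tendsto_inv_nhdsGT_zero
    have h2 : Tendsto (fun δ:ℝ => c / Real.log δ⁻¹) (𝓝[>] (0:ℝ)) (𝓝 0) :=
      Tendsto.div_atTop tendsto_const_nhds h1
    have h3 := (tendsto_const_nhds (x := (1/2:ℝ)) (f := 𝓝[>] (0:ℝ))).add h2
    simpa only [add_zero] using h3
  have hgb : IsBoundedUnder (· ≤ ·) (𝓝[>] (0:ℝ)) g := hgt.isBoundedUnder_le
  have hfb : IsBoundedUnder (· ≤ ·) (𝓝[>] (0:ℝ)) f := by
    obtain ⟨b, hbnd⟩ := hgb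
    refine ⟨b, ?_⟩
    rw [Filter.eventually_map] at hbnd ⊢
    filter_upwards [hbnd, hfg] with δ h1 h2 using le_trans h2 h1
  have hfcb : IsCoboundedUnder (· ≤ ·) (𝓝[>] (0:ℝ)) f := by
    apply Filter.IsBoundedUnder.isCoboundedUnder_le
    refine ⟨0, ?_⟩
    rw [Filter.eventually_map]
    exact hf0
  have hkappa : kappa Ω = Filter.limsup f (𝓝[>] (0:ℝ)) := rfl
  constructor
  · rw [hkappa]
    exact le_limsup_of_frequently_le hf0.frequently hfb
  · rw [hkappa]
    calc Filter.limsup f (𝓝[>] (0:ℝ)) ≤ Filter.limsup g (𝓝[>] (0:ℝ)) :=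
          limsup_le_limsup hfg hfcb hgb
      _ = 1/2 := hgt.limsup_eq

end
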